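/- arXiv:2203.17128 — 4 statements merged into one kernel-verified Lean document; each statement's English description precedes it below -/
import Mathlib

section
/- Let Ω ⊂ ℝⁿ be bounded with finite Borel measure μ, let σ ∈ C¹(ℝ) be bounded with bounded derivative, let η be bounded and measurable, and let (c, w, b) be a random vector with |c| ≤ K₀ a.s. Define B(x,y) = η(x)η(y)·E[K_{c,w,b}(x,y)] and (𝓑v)(y) = ∫_Ω B(x,y)v(x)dμ(x). Then for every measurable v with g := η·v ∈ L²(μ), one has ⟨v, 𝓑v⟩_{L²(μ)} = E[ (∫_Ω σ(w·x+b) g(x) dμ(x))² + c²( ‖∫_Ω σ'(w·x+b) x g(x) dμ(x)‖² + (∫_Ω σ'(w·x+b) g(x) dμ(x))² ) ], and in particular ⟨v, 𝓑v⟩_{L²(μ)} ≥ 0, i.e. the quadratic form of 𝓑 is positive semidefinite. -/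
open scoped RealInnerProductSpace BigOperators
open MeasureTheory

lemma fubini_swap_aux {α β : Type*} [MeasurableSpace α] [MeasurableSpace β]
    (ν : Measure α) [IsFiniteMeasure ν] (P : Measure β) [IsFiniteMeasure P]
    (f : α → ℝ) (hf : Integrable f ν)
    (k : β → α → ℝ)
    (hk : AEStronglyMeasurable (fun z : α × β => k z.2 z.1) (ν.prod P))
    (C : β → ℝ) (hC : Integrable C P)
    (hbd : ∀ᵐ z ∂ν.prod P, |k z.2 z.1| ≤ C z.2) :
    ∫ x, f x * ∫ ω, k ω x ∂P ∂ν = ∫ ω, ∫ x, f x * k ω x ∂ν ∂P := by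
  have hG : Integrable (fun z : α × β => |f z.1| * C z.2) (ν.prod P) :=
    hf.abs.mul_prod hC
  have hfm : AEStronglyMeasurable (fun z : α × β => f z.1) (ν.prod P) :=
    hf.1.comp_quasiMeasurePreserving Measure.quasiMeasurePreserving_fst
  have hH : Integrable (fun z : α × β => f z.1 * k z.2 z.1) (ν.prod P) := by
    refine hG.mono' (hfm.mul hk) ?_
    filter_upwards [hbd] with z hz
    rw [norm_mul, Real.norm_eq_abs, Real.norm_eq_abs]
    exact mul_le_mul_of_nonneg_left hz (abs_nonneg _)
  calc ∫ x, f x * ∫ ω, k ω x ∂P ∂ν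
      = ∫ x, ∫ ω, f x * k ω x ∂P ∂ν := by
        refine integral_congr_ae (Filter.Eventually.of_forall fun x => ?_)
        simp only [integral_const_mul]
    _ = ∫ ω, ∫ x, f x * k ω x ∂ν ∂P := integral_integral_swap hH

/-- The neural tangent kernel summand
`K_{c,w,b}(x,y) = σ(w·x+b)σ(w·y+b) + c²σ'(w·x+b)σ'(w·y+b)(x·y+1)`. -/
noncomputable def NTK {n : ℕ} (σ : ℝ → ℝ) (c : ℝ) (w : EuclideanSpace ℝ (Fin n)) (b : ℝ)
    (x y : EuclideanSpace ℝ (Fin n)) : ℝ :=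
  σ (⟪w, x⟫ + b) * σ (⟪w, y⟫ + b)
    + c ^ 2 * deriv σ (⟪w, x⟫ + b) * deriv σ (⟪w, y⟫ + b) * (⟪x, y⟫ + 1)

/-- Fubini identity for the quadratic form of the limiting kernel operator `𝓑`:
`⟨v, 𝓑v⟩ = E[(∫σ(w·x+b)g)² + c²(‖∫σ'(w·x+b)xg‖² + (∫σ'(w·x+b)g)²)]` with `g = η·v`,
hence positive semidefiniteness. -/
theorem stmt_5 {n : ℕ} (Ω : Set (EuclideanSpace ℝ (Fin n)))
    (hΩbd : Bornology.IsBounded Ω)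
    (μ : Measure (EuclideanSpace ℝ (Fin n))) [IsFiniteMeasure μ]
    (σ : ℝ → ℝ) (hσ : ContDiff ℝ 1 σ)
    (Mσ Mσ' : ℝ) (hσbd : ∀ x : ℝ, |σ x| ≤ Mσ) (hσ'bd : ∀ x : ℝ, |deriv σ x| ≤ Mσ')
    (η : EuclideanSpace ℝ (Fin n) → ℝ) (hηmeas : Measurable η)
    (Mη : ℝ) (hηbd : ∀ x, |η x| ≤ Mη)
    {Ω' : Type*} [MeasurableSpace Ω'] (P : Measure Ω') [IsProbabilityMeasure P]
    (c : Ω' → ℝ) (w : Ω' → EuclideanSpace ℝ (Fin n)) (b : Ω' → ℝ)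
    (hc : Measurable c) (hw : Measurable w) (hb : Measurable b)
    (K₀ : ℝ) (hcbd : ∀ᵐ ω ∂P, |c ω| ≤ K₀)
    (B : EuclideanSpace ℝ (Fin n) → EuclideanSpace ℝ (Fin n) → ℝ)
    (hB : ∀ x y, B x y = η x * η y * ∫ ω, NTK σ (c ω) (w ω) (b ω) x y ∂P)
    (v : EuclideanSpace ℝ (Fin n) → ℝ) (hvmeas : AEMeasurable v (μ.restrict Ω))
    (hg : MemLp (fun x => η x * v x) 2 (μ.restrict Ω)) :
    (∫ y in Ω, v y * (∫ x in Ω, B x y * v x ∂μ) ∂μ)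
      = ∫ ω, ((∫ x in Ω, σ (⟪w ω, x⟫ + b ω) * (η x * v x) ∂μ) ^ 2
          + (c ω) ^ 2 *
            (‖∫ x in Ω, (deriv σ (⟪w ω, x⟫ + b ω) * (η x * v x)) • x ∂μ‖ ^ 2
              + (∫ x in Ω, deriv σ (⟪w ω, x⟫ + b ω) * (η x * v x) ∂μ) ^ 2)) ∂P ∧
    0 ≤ ∫ y in Ω, v y * (∫ x in Ω, B x y * v x ∂μ) ∂μ := by
  have hσc : Continuous σ := hσ.continuous
  have hσ'c : Continuous (deriv σ) := hσ.continuous_deriv le_rfl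
  have hMσ0 : 0 ≤ Mσ := le_trans (abs_nonneg _) (hσbd 0)
  have hMσ'0 : 0 ≤ Mσ' := le_trans (abs_nonneg _) (hσ'bd 0)
  set ν := μ.restrict Ω with hν
  set v' : EuclideanSpace ℝ (Fin n) → ℝ := hvmeas.mk v with hv'
  have hv'meas : Measurable v' := hvmeas.measurable_mk
  have hvv' : v =ᵐ[ν] v' := hvmeas.ae_eq_mk
  set g : EuclideanSpace ℝ (Fin n) → ℝ := fun x => η x * v' x with hgdef
  have hgmeas : Measurable g := hηmeas.mul hv'meas
  have hgg : (fun x => η x * v x) =ᵐ[ν] g := hvv'.mono fun x hx => by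
    simp only [hgdef, hx]
  have hgint : Integrable g ν := ((hg.integrable one_le_two).congr hgg)
  -- radius bound
  obtain ⟨R₀, hR₀⟩ := isBounded_iff_forall_norm_le.mp hΩbd.closure
  set R : ℝ := max R₀ 0 with hRdef
  have hR0 : 0 ≤ R := le_max_right _ _
  have hRae : ∀ᵐ x ∂ν, ‖x‖ ≤ R := by
    have h1 : ∀ᵐ x ∂μ.restrict (closure Ω), ‖x‖ ≤ R :=
      (ae_restrict_mem isClosed_closure.measurableSet).mono fun x hx =>
        le_trans (hR₀ x hx) (le_max_left _ _)
    exact h1.filter_mono (ae_mono (Measure.restrict_mono subset_closure le_rfl))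
  -- joint measurability of the basic maps
  have hinner : Measurable fun z : EuclideanSpace ℝ (Fin n) × Ω' => ⟪w z.2, z.1⟫ :=
    (hw.comp measurable_snd).inner measurable_fst
  have hswm : Measurable fun z : EuclideanSpace ℝ (Fin n) × Ω' => σ (⟪w z.2, z.1⟫ + b z.2) :=
    hσc.measurable.comp (hinner.add (hb.comp measurable_snd))
  have hdwm : Measurable fun z : EuclideanSpace ℝ (Fin n) × Ω' =>
      deriv σ (⟪w z.2, z.1⟫ + b z.2) :=
    hσ'c.measurable.comp (hinner.add (hb.comp measurable_snd))
  -- sectionwise continuity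
  have hswc : ∀ ω, Continuous fun x : EuclideanSpace ℝ (Fin n) => σ (⟪w ω, x⟫ + b ω) :=
    fun ω => hσc.comp ((continuous_const.inner continuous_id).add continuous_const)
  have hdwc : ∀ ω, Continuous fun x : EuclideanSpace ℝ (Fin n) => deriv σ (⟪w ω, x⟫ + b ω) :=
    fun ω => hσ'c.comp ((continuous_const.inner continuous_id).add continuous_const)
  -- main quantities
  set A : Ω' → ℝ := fun ω => ∫ x, σ (⟪w ω, x⟫ + b ω) * g x ∂ν with hAdef
  set D : Ω' → ℝ := fun ω => ∫ x, deriv σ (⟪w ω, x⟫ + b ω) * g x ∂ν with hDdef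
  set V : Ω' → EuclideanSpace ℝ (Fin n) :=
    fun ω => ∫ x, (deriv σ (⟪w ω, x⟫ + b ω) * g x) • x ∂ν with hVdef
  -- integrability of sections
  have I1 : ∀ ω, Integrable (fun x => σ (⟪w ω, x⟫ + b ω) * g x) ν := fun ω =>
    hgint.bdd_mul (hswc ω).aestronglyMeasurable (Filter.Eventually.of_forall fun x => hσbd _)
  have I2 : ∀ ω, Integrable (fun x => deriv σ (⟪w ω, x⟫ + b ω) * g x) ν := fun ω =>
    hgint.bdd_mul (hdwc ω).aestronglyMeasurable (Filter.Eventually.of_forall fun x => hσ'bd _)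
  have IV : ∀ ω, Integrable (fun x => (deriv σ (⟪w ω, x⟫ + b ω) * g x) • x) ν := by
    intro ω
    refine Integrable.mono' (((I2 ω).abs.mul_const R)) ?_ ?_
    · exact ((hdwc ω).aestronglyMeasurable.mul hgint.1).smul aestronglyMeasurable_id
    · filter_upwards [hRae] with x hx
      rw [norm_smul, Real.norm_eq_abs]
      exact mul_le_mul_of_nonneg_left hx (abs_nonneg _)
  -- scalar/vector integral exchange with inner product
  have inner_swap : ∀ (h : EuclideanSpace ℝ (Fin n) → ℝ),
      Integrable (fun x => (h x) • x) ν → ∀ u : EuclideanSpace ℝ (Fin n),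
      ∫ x, h x * ⟪x, u⟫ ∂ν = ⟪u, ∫ x, (h x) • x ∂ν⟫ := by
    intro h hint u
    calc ∫ x, h x * ⟪x, u⟫ ∂ν
        = ∫ x, innerSL ℝ u ((h x) • x) ∂ν := by
          refine integral_congr_ae (Filter.Eventually.of_forall fun x => ?_)
          show h x * ⟪x, u⟫ = ⟪u, (h x) • x⟫
          rw [real_inner_smul_right, real_inner_comm x u]
      _ = innerSL ℝ u (∫ x, (h x) • x ∂ν) := (innerSL ℝ u).integral_comp_comm hint
      _ = ⟪u, ∫ x, (h x) • x ∂ν⟫ := rfl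
  have Iinner : ∀ ω (u : EuclideanSpace ℝ (Fin n)),
      Integrable (fun x => (deriv σ (⟪w ω, x⟫ + b ω) * g x) * ⟪x, u⟫) ν := by
    intro ω u
    have h1 := (innerSL ℝ u).integrable_comp (IV ω)
    refine h1.congr (Filter.Eventually.of_forall fun x => ?_)
    show (⟪u, (deriv σ (⟪w ω, x⟫ + b ω) * g x) • x⟫ : ℝ) = _
    simp only [real_inner_smul_right]
    rw [real_inner_comm u x]
  have eval1 : ∀ ω (y : EuclideanSpace ℝ (Fin n)),
      ∫ x, g x * NTK σ (c ω) (w ω) (b ω) x y ∂ν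
        = σ (⟪w ω, y⟫ + b ω) * A ω
          + (c ω) ^ 2 * deriv σ (⟪w ω, y⟫ + b ω) * (⟪V ω, y⟫ + D ω) := by
    intro ω y
    have I3 : Integrable (fun x => (deriv σ (⟪w ω, x⟫ + b ω) * g x) * ⟪x, y⟫
        + deriv σ (⟪w ω, x⟫ + b ω) * g x) ν := (Iinner ω y).add (I2 ω)
    calc ∫ x, g x * NTK σ (c ω) (w ω) (b ω) x y ∂ν
        = ∫ x, (σ (⟪w ω, y⟫ + b ω) * (σ (⟪w ω, x⟫ + b ω) * g x)
            + ((c ω) ^ 2 * deriv σ (⟪w ω, y⟫ + b ω)) *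
              ((deriv σ (⟪w ω, x⟫ + b ω) * g x) * ⟪x, y⟫
                + deriv σ (⟪w ω, x⟫ + b ω) * g x)) ∂ν := by
          refine integral_congr_ae (Filter.Eventually.of_forall fun x => ?_)
          simp only [NTK]; ring
      _ = σ (⟪w ω, y⟫ + b ω) * A ω
          + ((c ω) ^ 2 * deriv σ (⟪w ω, y⟫ + b ω)) *
            ((∫ x, (deriv σ (⟪w ω, x⟫ + b ω) * g x) * ⟪x, y⟫ ∂ν) + D ω) := by
          rw [integral_add ((I1 ω).const_mul _) (I3.const_mul _),
            integral_const_mul, integral_const_mul, integral_add (Iinner ω y) (I2 ω)]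
      _ = σ (⟪w ω, y⟫ + b ω) * A ω
          + (c ω) ^ 2 * deriv σ (⟪w ω, y⟫ + b ω) * (⟪V ω, y⟫ + D ω) := by
          rw [inner_swap _ (IV ω) y]
          rw [real_inner_comm _ y]
  have eval2 : ∀ ω, ∫ y, g y * (σ (⟪w ω, y⟫ + b ω) * A ω
        + (c ω) ^ 2 * deriv σ (⟪w ω, y⟫ + b ω) * (⟪V ω, y⟫ + D ω)) ∂ν
      = A ω ^ 2 + (c ω) ^ 2 * (‖V ω‖ ^ 2 + D ω ^ 2) := by
    intro ω
    have I4 : Integrable (fun y => (c ω) ^ 2 * ((deriv σ (⟪w ω, y⟫ + b ω) * g y) * ⟪y, V ω⟫)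
        + ((c ω) ^ 2 * D ω) * (deriv σ (⟪w ω, y⟫ + b ω) * g y)) ν :=
      ((Iinner ω (V ω)).const_mul _).add ((I2 ω).const_mul _)
    calc ∫ y, g y * (σ (⟪w ω, y⟫ + b ω) * A ω
          + (c ω) ^ 2 * deriv σ (⟪w ω, y⟫ + b ω) * (⟪V ω, y⟫ + D ω)) ∂ν
        = ∫ y, (A ω * (σ (⟪w ω, y⟫ + b ω) * g y)
            + ((c ω) ^ 2 * ((deriv σ (⟪w ω, y⟫ + b ω) * g y) * ⟪y, V ω⟫)
              + ((c ω) ^ 2 * D ω) * (deriv σ (⟪w ω, y⟫ + b ω) * g y))) ∂ν := by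
          refine integral_congr_ae (Filter.Eventually.of_forall fun y => ?_)
          show g y * (σ (⟪w ω, y⟫ + b ω) * A ω
              + (c ω) ^ 2 * deriv σ (⟪w ω, y⟫ + b ω) * (⟪V ω, y⟫ + D ω)) = _
          simp only [real_inner_comm (V ω)]; ring
      _ = A ω * A ω + ((c ω) ^ 2 * (∫ y, (deriv σ (⟪w ω, y⟫ + b ω) * g y) * ⟪y, V ω⟫ ∂ν)
            + ((c ω) ^ 2 * D ω) * D ω) := by
          rw [integral_add ((I1 ω).const_mul _) I4,
            integral_add ((Iinner ω (V ω)).const_mul _) ((I2 ω).const_mul _),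
            integral_const_mul, integral_const_mul, integral_const_mul]
      _ = A ω ^ 2 + (c ω) ^ 2 * (‖V ω‖ ^ 2 + D ω ^ 2) := by
          rw [inner_swap _ (IV ω) (V ω), real_inner_self_eq_norm_sq]; ring
  -- integrability of c² in ω
  have hc2int : Integrable (fun ω => (c ω) ^ 2) P := by
    refine Integrable.mono' (integrable_const (K₀ ^ 2))
      ((hc.pow_const 2).aestronglyMeasurable) ?_
    filter_upwards [hcbd] with ω h
    rw [Real.norm_eq_abs, abs_pow]
    exact pow_le_pow_left₀ (abs_nonneg _) h 2
  set L : ℝ := ∫ x, |g x| ∂ν with hLdef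
  have hL0 : 0 ≤ L := integral_nonneg fun x => abs_nonneg _
  have hAbd : ∀ ω, |A ω| ≤ Mσ * L := by
    intro ω
    rw [← Real.norm_eq_abs]
    calc ‖A ω‖ ≤ ∫ x, Mσ * |g x| ∂ν := by
          refine norm_integral_le_of_norm_le (hgint.abs.const_mul Mσ)
            (Filter.Eventually.of_forall fun x => ?_)
          rw [norm_mul, Real.norm_eq_abs, Real.norm_eq_abs]
          exact mul_le_mul_of_nonneg_right (hσbd _) (abs_nonneg _)
      _ = Mσ * L := integral_const_mul _ _
  have hDbd : ∀ ω, |D ω| ≤ Mσ' * L := by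
    intro ω
    rw [← Real.norm_eq_abs]
    calc ‖D ω‖ ≤ ∫ x, Mσ' * |g x| ∂ν := by
          refine norm_integral_le_of_norm_le (hgint.abs.const_mul Mσ')
            (Filter.Eventually.of_forall fun x => ?_)
          rw [norm_mul, Real.norm_eq_abs, Real.norm_eq_abs]
          exact mul_le_mul_of_nonneg_right (hσ'bd _) (abs_nonneg _)
      _ = Mσ' * L := integral_const_mul _ _
  have hVbd : ∀ ω, ‖V ω‖ ≤ Mσ' * R * L := by
    intro ω
    calc ‖V ω‖ ≤ ∫ x, (Mσ' * R) * |g x| ∂ν := by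
          refine norm_integral_le_of_norm_le (hgint.abs.const_mul _) ?_
          filter_upwards [hRae] with x hx
          rw [norm_smul, Real.norm_eq_abs, abs_mul]
          calc |deriv σ (⟪w ω, x⟫ + b ω)| * |g x| * ‖x‖
              ≤ Mσ' * |g x| * R := by
                refine mul_le_mul (mul_le_mul_of_nonneg_right (hσ'bd _) (abs_nonneg _))
                  hx (norm_nonneg _) (by positivity)
            _ = (Mσ' * R) * |g x| := by ring
      _ = Mσ' * R * L := integral_const_mul _ _
  -- lift a.e. facts to the product
  have hRprod : ∀ᵐ z ∂ν.prod P, ‖z.1‖ ≤ R :=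
    Measure.quasiMeasurePreserving_fst.ae hRae
  -- step 1 : rewrite the quadratic form using g
  have step1 : (∫ y, v y * (∫ x, B x y * v x ∂ν) ∂ν)
      = ∫ y, g y * ∫ x, g x * (∫ ω, NTK σ (c ω) (w ω) (b ω) x y ∂P) ∂ν ∂ν := by
    refine integral_congr_ae ?_
    filter_upwards [hvv'] with y hy
    have hinner_eq : (∫ x, B x y * v x ∂ν)
        = η y * ∫ x, g x * (∫ ω, NTK σ (c ω) (w ω) (b ω) x y ∂P) ∂ν := by
      rw [← integral_const_mul]
      refine integral_congr_ae ?_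
      filter_upwards [hvv'] with x hx
      show B x y * v x = η y * (g x * ∫ ω, NTK σ (c ω) (w ω) (b ω) x y ∂P)
      rw [hB x y, hx]
      simp only [hgdef]
      ring
    show v y * (∫ x, B x y * v x ∂ν) = _
    rw [hinner_eq, hy]
    simp only [hgdef]
    ring
  -- step 2 : inner Fubini swap, for a.e. y
  have step2 : ∀ᵐ y ∂ν, (∫ x, g x * (∫ ω, NTK σ (c ω) (w ω) (b ω) x y ∂P) ∂ν)
      = ∫ ω, (σ (⟪w ω, y⟫ + b ω) * A ω
          + (c ω) ^ 2 * deriv σ (⟪w ω, y⟫ + b ω) * (⟪V ω, y⟫ + D ω)) ∂P := by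
    filter_upwards [hRae] with y hy
    have hmeas : AEStronglyMeasurable
        (fun z : EuclideanSpace ℝ (Fin n) × Ω' => NTK σ (c z.2) (w z.2) (b z.2) z.1 y)
        (ν.prod P) := by
      apply Measurable.aestronglyMeasurable
      have m2 : Measurable fun z : EuclideanSpace ℝ (Fin n) × Ω' =>
          σ (⟪w z.2, y⟫ + b z.2) :=
        hσc.measurable.comp (((hw.comp measurable_snd).inner measurable_const).add
          (hb.comp measurable_snd))
      have m4 : Measurable fun z : EuclideanSpace ℝ (Fin n) × Ω' =>
          deriv σ (⟪w z.2, y⟫ + b z.2) :=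
        hσ'c.measurable.comp (((hw.comp measurable_snd).inner measurable_const).add
          (hb.comp measurable_snd))
      have m5 : Measurable fun z : EuclideanSpace ℝ (Fin n) × Ω' => (⟪z.1, y⟫ : ℝ) + 1 :=
        (measurable_fst.inner measurable_const).add measurable_const
      exact (hswm.mul m2).add
        (((((hc.comp measurable_snd).pow_const 2).mul hdwm).mul m4).mul m5)
    have hbd : ∀ᵐ z ∂ν.prod P, |NTK σ (c z.2) (w z.2) (b z.2) z.1 y|
        ≤ Mσ * Mσ + (c z.2) ^ 2 * (Mσ' * Mσ' * (R * R + 1)) := by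
      filter_upwards [hRprod] with z hz
      simp only [NTK]
      have e1 : |σ (⟪w z.2, z.1⟫ + b z.2) * σ (⟪w z.2, y⟫ + b z.2)| ≤ Mσ * Mσ := by
        rw [abs_mul]
        exact mul_le_mul (hσbd _) (hσbd _) (abs_nonneg _) hMσ0
      have ht : |(⟪z.1, y⟫ : ℝ) + 1| ≤ R * R + 1 := by
        calc |(⟪z.1, y⟫ : ℝ) + 1| ≤ |(⟪z.1, y⟫ : ℝ)| + 1 := by
              simpa using abs_add_le (⟪z.1, y⟫ : ℝ) 1
          _ ≤ ‖z.1‖ * ‖y‖ + 1 := by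
              have := abs_real_inner_le_norm z.1 y
              linarith
          _ ≤ R * R + 1 := by
              have h1 : ‖z.1‖ * ‖y‖ ≤ R * R :=
                mul_le_mul hz hy (norm_nonneg _) hR0
              linarith
      have e2 : |(c z.2) ^ 2 * deriv σ (⟪w z.2, z.1⟫ + b z.2)
            * deriv σ (⟪w z.2, y⟫ + b z.2) * ((⟪z.1, y⟫ : ℝ) + 1)|
          ≤ (c z.2) ^ 2 * (Mσ' * Mσ' * (R * R + 1)) := by
        rw [abs_mul, abs_mul, abs_mul, abs_pow, sq_abs]
        calc (c z.2) ^ 2 * |deriv σ (⟪w z.2, z.1⟫ + b z.2)|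
              * |deriv σ (⟪w z.2, y⟫ + b z.2)| * |(⟪z.1, y⟫ : ℝ) + 1|
            ≤ (c z.2) ^ 2 * Mσ' * Mσ' * (R * R + 1) := by
              have h2 : (0:ℝ) ≤ (c z.2) ^ 2 := sq_nonneg _
              refine mul_le_mul (mul_le_mul (mul_le_mul_of_nonneg_left (hσ'bd _) h2)
                (hσ'bd _) (abs_nonneg _) (by positivity)) ht (abs_nonneg _) (by positivity)
          _ = (c z.2) ^ 2 * (Mσ' * Mσ' * (R * R + 1)) := by ring
      exact (abs_add_le _ _).trans (add_le_add e1 e2)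
    calc ∫ x, g x * (∫ ω, NTK σ (c ω) (w ω) (b ω) x y ∂P) ∂ν
        = ∫ ω, ∫ x, g x * NTK σ (c ω) (w ω) (b ω) x y ∂ν ∂P :=
          fubini_swap_aux ν P g hgint (fun ω x => NTK σ (c ω) (w ω) (b ω) x y) hmeas
            (fun ω => Mσ * Mσ + (c ω) ^ 2 * (Mσ' * Mσ' * (R * R + 1)))
            ((integrable_const _).add (hc2int.mul_const _)) hbd
      _ = ∫ ω, (σ (⟪w ω, y⟫ + b ω) * A ω
          + (c ω) ^ 2 * deriv σ (⟪w ω, y⟫ + b ω) * (⟪V ω, y⟫ + D ω)) ∂P :=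
          integral_congr_ae (Filter.Eventually.of_forall fun ω => eval1 ω y)
  -- measurability of A, D, V in ω
  have hAmeas : AEStronglyMeasurable A P := by
    have : AEStronglyMeasurable
        (fun p : Ω' × EuclideanSpace ℝ (Fin n) => σ (⟪w p.1, p.2⟫ + b p.1) * g p.2)
        (P.prod ν) := by
      apply Measurable.aestronglyMeasurable
      exact (hσc.measurable.comp (((hw.comp measurable_fst).inner measurable_snd).add
        (hb.comp measurable_fst))).mul (hgmeas.comp measurable_snd)
    exact this.integral_prod_right'
  have hDmeas : AEStronglyMeasurable D P := by
    have : AEStronglyMeasurable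
        (fun p : Ω' × EuclideanSpace ℝ (Fin n) => deriv σ (⟪w p.1, p.2⟫ + b p.1) * g p.2)
        (P.prod ν) := by
      apply Measurable.aestronglyMeasurable
      exact (hσ'c.measurable.comp (((hw.comp measurable_fst).inner measurable_snd).add
        (hb.comp measurable_fst))).mul (hgmeas.comp measurable_snd)
    exact this.integral_prod_right'
  have hVmeas : AEStronglyMeasurable V P := by
    have : AEStronglyMeasurable
        (fun p : Ω' × EuclideanSpace ℝ (Fin n) =>
          (deriv σ (⟪w p.1, p.2⟫ + b p.1) * g p.2) • p.2)
        (P.prod ν) := by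
      apply Measurable.aestronglyMeasurable
      exact ((hσ'c.measurable.comp (((hw.comp measurable_fst).inner measurable_snd).add
        (hb.comp measurable_fst))).mul (hgmeas.comp measurable_snd)).smul measurable_snd
    exact this.integral_prod_right'
  -- step 3 : outer Fubini swap
  have hA2 : AEStronglyMeasurable (fun z : EuclideanSpace ℝ (Fin n) × Ω' => A z.2) (ν.prod P) :=
    hAmeas.comp_quasiMeasurePreserving Measure.quasiMeasurePreserving_snd
  have hD2 : AEStronglyMeasurable (fun z : EuclideanSpace ℝ (Fin n) × Ω' => D z.2) (ν.prod P) :=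
    hDmeas.comp_quasiMeasurePreserving Measure.quasiMeasurePreserving_snd
  have hV2 : AEStronglyMeasurable (fun z : EuclideanSpace ℝ (Fin n) × Ω' => V z.2) (ν.prod P) :=
    hVmeas.comp_quasiMeasurePreserving Measure.quasiMeasurePreserving_snd
  have hinnerV : AEStronglyMeasurable
      (fun z : EuclideanSpace ℝ (Fin n) × Ω' => (⟪V z.2, z.1⟫ : ℝ)) (ν.prod P) := by
    rw [aestronglyMeasurable_iff_aemeasurable]
    exact hV2.aemeasurable.inner measurable_fst.aemeasurable
  have hKpm : AEStronglyMeasurable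
      (fun z : EuclideanSpace ℝ (Fin n) × Ω' => σ (⟪w z.2, z.1⟫ + b z.2) * A z.2
        + (c z.2) ^ 2 * deriv σ (⟪w z.2, z.1⟫ + b z.2) * (⟪V z.2, z.1⟫ + D z.2)) (ν.prod P) :=
    (hswm.aestronglyMeasurable.mul hA2).add
      ((((hc.comp measurable_snd).pow_const 2).aestronglyMeasurable.mul
        hdwm.aestronglyMeasurable).mul (hinnerV.add hD2))
  have hbd2 : ∀ᵐ z ∂ν.prod P, |σ (⟪w z.2, z.1⟫ + b z.2) * A z.2
        + (c z.2) ^ 2 * deriv σ (⟪w z.2, z.1⟫ + b z.2) * (⟪V z.2, z.1⟫ + D z.2)|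
      ≤ Mσ * (Mσ * L) + (c z.2) ^ 2 * (Mσ' * ((Mσ' * R * L) * R + Mσ' * L)) := by
    filter_upwards [hRprod] with z hz
    have e1 : |σ (⟪w z.2, z.1⟫ + b z.2) * A z.2| ≤ Mσ * (Mσ * L) := by
      rw [abs_mul]
      exact mul_le_mul (hσbd _) (hAbd _) (abs_nonneg _) hMσ0
    have ht : |(⟪V z.2, z.1⟫ : ℝ) + D z.2| ≤ (Mσ' * R * L) * R + Mσ' * L := by
      calc |(⟪V z.2, z.1⟫ : ℝ) + D z.2| ≤ |(⟪V z.2, z.1⟫ : ℝ)| + |D z.2| := abs_add_le _ _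
        _ ≤ ‖V z.2‖ * ‖z.1‖ + |D z.2| := by
            have := abs_real_inner_le_norm (V z.2) z.1
            linarith
        _ ≤ (Mσ' * R * L) * R + Mσ' * L := by
            have h1 : ‖V z.2‖ * ‖z.1‖ ≤ (Mσ' * R * L) * R :=
              mul_le_mul (hVbd _) hz (norm_nonneg _) (by positivity)
            have h2 := hDbd z.2
            linarith
    have e2 : |(c z.2) ^ 2 * deriv σ (⟪w z.2, z.1⟫ + b z.2) * ((⟪V z.2, z.1⟫ : ℝ) + D z.2)|
        ≤ (c z.2) ^ 2 * (Mσ' * ((Mσ' * R * L) * R + Mσ' * L)) := by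
      rw [abs_mul, abs_mul, abs_pow, sq_abs]
      calc (c z.2) ^ 2 * |deriv σ (⟪w z.2, z.1⟫ + b z.2)| * |(⟪V z.2, z.1⟫ : ℝ) + D z.2|
          ≤ (c z.2) ^ 2 * Mσ' * ((Mσ' * R * L) * R + Mσ' * L) := by
            have h2 : (0:ℝ) ≤ (c z.2) ^ 2 := sq_nonneg _
            refine mul_le_mul (mul_le_mul_of_nonneg_left (hσ'bd _) h2) ht (abs_nonneg _)
              (by positivity)
        _ = (c z.2) ^ 2 * (Mσ' * ((Mσ' * R * L) * R + Mσ' * L)) := by ring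
    exact (abs_add_le _ _).trans (add_le_add e1 e2)
  have step3 : ∫ y, g y * ∫ ω, (σ (⟪w ω, y⟫ + b ω) * A ω
        + (c ω) ^ 2 * deriv σ (⟪w ω, y⟫ + b ω) * (⟪V ω, y⟫ + D ω)) ∂P ∂ν
      = ∫ ω, (A ω ^ 2 + (c ω) ^ 2 * (‖V ω‖ ^ 2 + D ω ^ 2)) ∂P := by
    calc ∫ y, g y * ∫ ω, (σ (⟪w ω, y⟫ + b ω) * A ω
          + (c ω) ^ 2 * deriv σ (⟪w ω, y⟫ + b ω) * (⟪V ω, y⟫ + D ω)) ∂P ∂ν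
        = ∫ ω, ∫ y, g y * (σ (⟪w ω, y⟫ + b ω) * A ω
          + (c ω) ^ 2 * deriv σ (⟪w ω, y⟫ + b ω) * (⟪V ω, y⟫ + D ω)) ∂ν ∂P :=
          fubini_swap_aux ν P g hgint _ hKpm _
            ((integrable_const _).add (hc2int.mul_const _)) hbd2
      _ = ∫ ω, (A ω ^ 2 + (c ω) ^ 2 * (‖V ω‖ ^ 2 + D ω ^ 2)) ∂P :=
          integral_congr_ae (Filter.Eventually.of_forall eval2)
  -- main identity in terms of A, D, V
  have main : (∫ y, v y * (∫ x, B x y * v x ∂ν) ∂ν)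
      = ∫ ω, (A ω ^ 2 + (c ω) ^ 2 * (‖V ω‖ ^ 2 + D ω ^ 2)) ∂P := by
    rw [step1, ← step3]
    refine integral_congr_ae ?_
    filter_upwards [step2] with y hy
    show g y * _ = g y * _
    rw [hy]
  -- identify the statement's right-hand side
  have hRHS : ∫ ω, ((∫ x, σ (⟪w ω, x⟫ + b ω) * (η x * v x) ∂ν) ^ 2
        + (c ω) ^ 2 *
          (‖∫ x, (deriv σ (⟪w ω, x⟫ + b ω) * (η x * v x)) • x ∂ν‖ ^ 2
            + (∫ x, deriv σ (⟪w ω, x⟫ + b ω) * (η x * v x) ∂ν) ^ 2)) ∂P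
      = ∫ ω, (A ω ^ 2 + (c ω) ^ 2 * (‖V ω‖ ^ 2 + D ω ^ 2)) ∂P := by
    refine integral_congr_ae (Filter.Eventually.of_forall fun ω => ?_)
    have e1 : ∫ x, σ (⟪w ω, x⟫ + b ω) * (η x * v x) ∂ν = A ω := by
      refine integral_congr_ae ?_
      filter_upwards [hgg] with x hx
      show σ (⟪w ω, x⟫ + b ω) * (η x * v x) = _
      rw [hx]
    have e2 : ∫ x, (deriv σ (⟪w ω, x⟫ + b ω) * (η x * v x)) • x ∂ν = V ω := by
      refine integral_congr_ae ?_
      filter_upwards [hgg] with x hx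
      show (deriv σ (⟪w ω, x⟫ + b ω) * (η x * v x)) • x = _
      rw [hx]
    have e3 : ∫ x, deriv σ (⟪w ω, x⟫ + b ω) * (η x * v x) ∂ν = D ω := by
      refine integral_congr_ae ?_
      filter_upwards [hgg] with x hx
      show deriv σ (⟪w ω, x⟫ + b ω) * (η x * v x) = _
      rw [hx]
    simp only [e1, e2, e3]
  refine ⟨main.trans hRHS.symm, ?_⟩
  rw [main]
  exact integral_nonneg fun ω => by positivity
end

section
/- Let n ∈ ℕ, let σ ∈ C²(ℝ) be bounded with bounded first and second derivatives, let R > 0, C₁ > 0, ρ > 0, and N ≥ 1. Suppose for i = 1,…,N we are given parameter tuples (c₀ⁱ, w₀ⁱ, b₀ⁱ) and (c₁ⁱ, w₁ⁱ, b₁ⁱ) in ℝ × ℝⁿ × ℝ with |c₀ⁱ| ≤ C₁, |c₁ⁱ| ≤ C₁, |c₁ⁱ − c₀ⁱ| ≤ ρ, ‖w₁ⁱ − w₀ⁱ‖₁ ≤ ρ, and |b₁ⁱ − b₀ⁱ| ≤ ρ. For j ∈ {0,1} define A_j^N(x,y) = (1/N) Σ_{i=1}^N K_{c_jⁱ, w_jⁱ,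 b_jⁱ}(x,y). Then there exists a constant C depending only on σ, C₁, R and n (not on N or ρ) such that |A₁^N(x,y) − A₀^N(x,y)| ≤ C ρ for all x, y ∈ ℝⁿ with ‖x‖ ≤ R and ‖y‖ ≤ R. -/
open scoped RealInnerProductSpace BigOperators

/-- Mean value inequality: a bound on the derivative gives a Lipschitz estimate. -/
lemma lip_of_deriv_bound (f : ℝ → ℝ) (hf : Differentiable ℝ f) {M : ℝ} (hM0 : 0 ≤ M)
    (hM : ∀ x, |deriv f x| ≤ M) (a b : ℝ) : |f a - f b| ≤ M * |a - b| := by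
  have h := (lipschitzWith_of_nnnorm_deriv_le hf (C := Real.toNNReal M)
    (fun x => by
      rw [← NNReal.coe_le_coe, coe_nnnorm, Real.norm_eq_abs, Real.coe_toNNReal _ hM0]
      exact hM x)).dist_le_mul a b
  simpa [Real.dist_eq, Real.coe_toNNReal _ hM0] using h

lemma coord_abs_le_norm {n : ℕ} (x : EuclideanSpace ℝ (Fin n)) (k : Fin n) :
    |x k| ≤ ‖x‖ := by
  rw [EuclideanSpace.norm_eq, ← Real.sqrt_sq_eq_abs]
  apply Real.sqrt_le_sqrt
  have : |x k| ^ 2 ≤ ∑ i, ‖x i‖ ^ 2 := by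
    simpa [Real.norm_eq_abs] using
      Finset.single_le_sum (f := fun i => |x i| ^ 2)
        (fun i _ => sq_nonneg _) (Finset.mem_univ k)
  simpa [sq_abs] using this

/-- Stability of the empirical NTK under parameter perturbations: if the parameters of a
width-`N` network move by at most `ρ` (and the `c`'s stay bounded by `C₁`), then the
empirical kernels differ by at most `C·ρ` on the ball of radius `R`, with `C` depending
only on `σ`, `C₁`, `R` and `n`. -/
theorem stmt_7 (n : ℕ) (σ : ℝ → ℝ) (hσ : ContDiff ℝ 2 σ)
    (hσ0 : ∃ M : ℝ, ∀ x : ℝ, |σ x| ≤ M)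
    (hσ1 : ∃ M : ℝ, ∀ x : ℝ, |deriv σ x| ≤ M)
    (hσ2 : ∃ M : ℝ, ∀ x : ℝ, |deriv (deriv σ) x| ≤ M)
    (R C₁ : ℝ) (hR : 0 < R) (hC₁ : 0 < C₁) :
    ∃ C : ℝ, ∀ (N : ℕ), 1 ≤ N → ∀ (ρ : ℝ), 0 < ρ →
      ∀ (c₀ c₁ : Fin N → ℝ) (w₀ w₁ : Fin N → EuclideanSpace ℝ (Fin n))
        (b₀ b₁ : Fin N → ℝ),
        (∀ i, |c₀ i| ≤ C₁) → (∀ i, |c₁ i| ≤ C₁) →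
        (∀ i, |c₁ i - c₀ i| ≤ ρ) →
        (∀ i, (∑ k : Fin n, |w₁ i k - w₀ i k|) ≤ ρ) →
        (∀ i, |b₁ i - b₀ i| ≤ ρ) →
        ∀ x y : EuclideanSpace ℝ (Fin n), ‖x‖ ≤ R → ‖y‖ ≤ R →
          |(N : ℝ)⁻¹ * (∑ i : Fin N, NTK σ (c₁ i) (w₁ i) (b₁ i) x y)
            - (N : ℝ)⁻¹ * (∑ i : Fin N, NTK σ (c₀ i) (w₀ i) (b₀ i) x y)| ≤ C * ρ := by
  obtain ⟨M₀, hM₀⟩ := hσ0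
  obtain ⟨M₁, hM₁⟩ := hσ1
  obtain ⟨M₂, hM₂⟩ := hσ2
  have hM₀0 : 0 ≤ M₀ := le_trans (abs_nonneg _) (hM₀ 0)
  have hM₁0 : 0 ≤ M₁ := le_trans (abs_nonneg _) (hM₁ 0)
  have hM₂0 : 0 ≤ M₂ := le_trans (abs_nonneg _) (hM₂ 0)
  have hσd : Differentiable ℝ σ := hσ.differentiable (by norm_num)
  have hσd' : Differentiable ℝ (deriv σ) := by
    have h2 : ContDiff ℝ (1 + 1) σ := by exact_mod_cast hσ
    exact (contDiff_succ_iff_deriv.mp h2).2.2.differentiable (by norm_num)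
  -- Lipschitz estimates
  have lipσ : ∀ a b : ℝ, |σ a - σ b| ≤ M₁ * |a - b| :=
    lip_of_deriv_bound σ hσd hM₁0 hM₁
  have lipσ' : ∀ a b : ℝ, |deriv σ a - deriv σ b| ≤ M₂ * |a - b| :=
    lip_of_deriv_bound (deriv σ) hσd' hM₂0 hM₂
  refine ⟨2 * (M₀ * (M₁ * (R + 1))) +
      (2 * C₁ * (M₁ * M₁) + 2 * (C₁ ^ 2 * (M₂ * (R + 1) * M₁))) * (R ^ 2 + 1), ?_⟩
  intro N hN ρ hρ c₀ c₁ w₀ w₁ b₀ b₁ hc₀ hc₁ hcd hwd hbd x y hx hy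
  set C : ℝ := 2 * (M₀ * (M₁ * (R + 1))) +
      (2 * C₁ * (M₁ * M₁) + 2 * (C₁ ^ 2 * (M₂ * (R + 1) * M₁))) * (R ^ 2 + 1) with hC
  -- per-term bound
  have key : ∀ i : Fin N,
      |NTK σ (c₁ i) (w₁ i) (b₁ i) x y - NTK σ (c₀ i) (w₀ i) (b₀ i) x y| ≤ C * ρ := by
    intro i
    -- argument perturbation bounds
    have harg : ∀ z : EuclideanSpace ℝ (Fin n), ‖z‖ ≤ R →
        |(⟪w₁ i, z⟫ + b₁ i) - (⟪w₀ i, z⟫ + b₀ i)| ≤ (R + 1) * ρ := by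
      intro z hz
      have h1 : |⟪w₁ i, z⟫ - ⟪w₀ i, z⟫| ≤ R * ρ := by
        have : ⟪w₁ i, z⟫ - ⟪w₀ i, z⟫ = ∑ k, (w₁ i k - w₀ i k) * z k := by
          simp [PiLp.inner_apply, RCLike.inner_apply, ← Finset.sum_sub_distrib, sub_mul]
          exact Finset.sum_congr rfl (fun k _ => by ring)
        rw [this]
        calc |∑ k, (w₁ i k - w₀ i k) * z k| ≤ ∑ k, |(w₁ i k - w₀ i k) * z k| :=
              Finset.abs_sum_le_sum_abs _ _
          _ ≤ ∑ k, |w₁ i k - w₀ i k| * R := by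
              apply Finset.sum_le_sum
              intro k _
              rw [abs_mul]
              exact mul_le_mul_of_nonneg_left ((coord_abs_le_norm z k).trans hz)
                (abs_nonneg _)
          _ = (∑ k, |w₁ i k - w₀ i k|) * R := by rw [Finset.sum_mul]
          _ ≤ ρ * R := mul_le_mul_of_nonneg_right (hwd i) hR.le
          _ = R * ρ := mul_comm _ _
      calc |(⟪w₁ i, z⟫ + b₁ i) - (⟪w₀ i, z⟫ + b₀ i)|
          ≤ |⟪w₁ i, z⟫ - ⟪w₀ i, z⟫| + |b₁ i - b₀ i| := by
            rw [show (⟪w₁ i, z⟫ + b₁ i) - (⟪w₀ i, z⟫ + b₀ i)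
              = (⟪w₁ i, z⟫ - ⟪w₀ i, z⟫) + (b₁ i - b₀ i) by ring]
            exact abs_add_le _ _
        _ ≤ R * ρ + ρ := add_le_add h1 (hbd i)
        _ = (R + 1) * ρ := by ring
    set u₀ := ⟪w₀ i, x⟫ + b₀ i
    set u₁ := ⟪w₁ i, x⟫ + b₁ i
    set v₀ := ⟪w₀ i, y⟫ + b₀ i
    set v₁ := ⟪w₁ i, y⟫ + b₁ i
    have hu : |u₁ - u₀| ≤ (R + 1) * ρ := harg x hx
    have hv : |v₁ - v₀| ≤ (R + 1) * ρ := harg y hy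
    have hsu : |σ u₁ - σ u₀| ≤ M₁ * ((R + 1) * ρ) :=
      (lipσ u₁ u₀).trans (mul_le_mul_of_nonneg_left hu hM₁0)
    have hsv : |σ v₁ - σ v₀| ≤ M₁ * ((R + 1) * ρ) :=
      (lipσ v₁ v₀).trans (mul_le_mul_of_nonneg_left hv hM₁0)
    have hpu : |deriv σ u₁ - deriv σ u₀| ≤ M₂ * ((R + 1) * ρ) :=
      (lipσ' u₁ u₀).trans (mul_le_mul_of_nonneg_left hu hM₂0)
    have hpv : |deriv σ v₁ - deriv σ v₀| ≤ M₂ * ((R + 1) * ρ) :=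
      (lipσ' v₁ v₀).trans (mul_le_mul_of_nonneg_left hv hM₂0)
    have hd : |⟪x, y⟫ + 1| ≤ R ^ 2 + 1 := by
      calc |⟪x, y⟫ + 1| ≤ |⟪x, y⟫| + 1 := by simpa using abs_add_le ⟪x, y⟫ 1
        _ ≤ ‖x‖ * ‖y‖ + 1 := by linarith [abs_real_inner_le_norm x y]
        _ ≤ R ^ 2 + 1 := by nlinarith [norm_nonneg x, norm_nonneg y]
    -- first product
    have hterm1 : |σ u₁ * σ v₁ - σ u₀ * σ v₀| ≤ 2 * (M₀ * (M₁ * (R + 1))) * ρ := by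
      calc |σ u₁ * σ v₁ - σ u₀ * σ v₀|
          = |(σ u₁ - σ u₀) * σ v₁ + σ u₀ * (σ v₁ - σ v₀)| := by ring_nf
        _ ≤ |(σ u₁ - σ u₀) * σ v₁| + |σ u₀ * (σ v₁ - σ v₀)| := abs_add_le _ _
        _ = |σ u₁ - σ u₀| * |σ v₁| + |σ u₀| * |σ v₁ - σ v₀| := by rw [abs_mul, abs_mul]
        _ ≤ (M₁ * ((R + 1) * ρ)) * M₀ + M₀ * (M₁ * ((R + 1) * ρ)) := by
            gcongr <;> first | exact hsu | exact hsv | exact hM₀ _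
        _ = 2 * (M₀ * (M₁ * (R + 1))) * ρ := by ring
    -- second product
    have hterm2 : |(c₁ i) ^ 2 * deriv σ u₁ * deriv σ v₁
        - (c₀ i) ^ 2 * deriv σ u₀ * deriv σ v₀|
        ≤ (2 * C₁ * (M₁ * M₁) + 2 * (C₁ ^ 2 * (M₂ * (R + 1) * M₁))) * ρ := by
      have hcsq : |(c₁ i) ^ 2 - (c₀ i) ^ 2| ≤ 2 * C₁ * ρ := by
        have : (c₁ i) ^ 2 - (c₀ i) ^ 2 = (c₁ i - c₀ i) * (c₁ i + c₀ i) := by ring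
        rw [this, abs_mul]
        have h2 : |c₁ i + c₀ i| ≤ 2 * C₁ :=
          (abs_add_le _ _).trans (by linarith [hc₁ i, hc₀ i])
        calc |c₁ i - c₀ i| * |c₁ i + c₀ i| ≤ ρ * (2 * C₁) := by
              gcongr <;> first | exact hcd i | exact h2
          _ = 2 * C₁ * ρ := by ring
      have hc0sq : |(c₀ i) ^ 2| ≤ C₁ ^ 2 := by
        rw [abs_pow]
        exact pow_le_pow_left₀ (abs_nonneg _) (hc₀ i) 2
      calc |(c₁ i) ^ 2 * deriv σ u₁ * deriv σ v₁ - (c₀ i) ^ 2 * deriv σ u₀ * deriv σ v₀|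
          = |((c₁ i) ^ 2 - (c₀ i) ^ 2) * deriv σ u₁ * deriv σ v₁
            + (c₀ i) ^ 2 * (deriv σ u₁ - deriv σ u₀) * deriv σ v₁
            + (c₀ i) ^ 2 * deriv σ u₀ * (deriv σ v₁ - deriv σ v₀)| := by ring_nf
        _ ≤ |((c₁ i) ^ 2 - (c₀ i) ^ 2) * deriv σ u₁ * deriv σ v₁
            + (c₀ i) ^ 2 * (deriv σ u₁ - deriv σ u₀) * deriv σ v₁|
            + |(c₀ i) ^ 2 * deriv σ u₀ * (deriv σ v₁ - deriv σ v₀)| := abs_add_le _ _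
        _ ≤ |((c₁ i) ^ 2 - (c₀ i) ^ 2) * deriv σ u₁ * deriv σ v₁|
            + |(c₀ i) ^ 2 * (deriv σ u₁ - deriv σ u₀) * deriv σ v₁|
            + |(c₀ i) ^ 2 * deriv σ u₀ * (deriv σ v₁ - deriv σ v₀)| := by
            linarith [abs_add_le (((c₁ i) ^ 2 - (c₀ i) ^ 2) * deriv σ u₁ * deriv σ v₁)
              ((c₀ i) ^ 2 * (deriv σ u₁ - deriv σ u₀) * deriv σ v₁)]
        _ = |(c₁ i) ^ 2 - (c₀ i) ^ 2| * |deriv σ u₁| * |deriv σ v₁|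
            + |(c₀ i) ^ 2| * |deriv σ u₁ - deriv σ u₀| * |deriv σ v₁|
            + |(c₀ i) ^ 2| * |deriv σ u₀| * |deriv σ v₁ - deriv σ v₀| := by
            rw [abs_mul, abs_mul, abs_mul, abs_mul, abs_mul, abs_mul]
        _ ≤ (2 * C₁ * ρ) * M₁ * M₁
            + C₁ ^ 2 * (M₂ * ((R + 1) * ρ)) * M₁
            + C₁ ^ 2 * M₁ * (M₂ * ((R + 1) * ρ)) := by
            gcongr <;>
              first
                | exact hcsq | exact hM₁ _ | exact hc0sq | exact hpu | exact hpv
        _ = (2 * C₁ * (M₁ * M₁) + 2 * (C₁ ^ 2 * (M₂ * (R + 1) * M₁))) * ρ := by ring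
    -- combine
    have expand : NTK σ (c₁ i) (w₁ i) (b₁ i) x y - NTK σ (c₀ i) (w₀ i) (b₀ i) x y
        = (σ u₁ * σ v₁ - σ u₀ * σ v₀)
          + ((c₁ i) ^ 2 * deriv σ u₁ * deriv σ v₁
              - (c₀ i) ^ 2 * deriv σ u₀ * deriv σ v₀) * (⟪x, y⟫ + 1) := by
      simp only [NTK]; ring
    rw [expand]
    calc |(σ u₁ * σ v₁ - σ u₀ * σ v₀)
          + ((c₁ i) ^ 2 * deriv σ u₁ * deriv σ v₁
              - (c₀ i) ^ 2 * deriv σ u₀ * deriv σ v₀) * (⟪x, y⟫ + 1)|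
        ≤ |σ u₁ * σ v₁ - σ u₀ * σ v₀|
          + |(c₁ i) ^ 2 * deriv σ u₁ * deriv σ v₁
              - (c₀ i) ^ 2 * deriv σ u₀ * deriv σ v₀| * |⟪x, y⟫ + 1| := by
          rw [← abs_mul]; exact abs_add_le _ _
      _ ≤ 2 * (M₀ * (M₁ * (R + 1))) * ρ
          + ((2 * C₁ * (M₁ * M₁) + 2 * (C₁ ^ 2 * (M₂ * (R + 1) * M₁))) * ρ) * (R ^ 2 + 1) := by
          gcongr <;> first | exact hterm1 | exact hterm2 | exact hd
      _ = C * ρ := by rw [hC]; ring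
  -- average the per-term bounds
  have hNpos : (0 : ℝ) < N := by exact_mod_cast Nat.lt_of_lt_of_le Nat.zero_lt_one hN
  rw [← mul_sub, ← Finset.sum_sub_distrib, abs_mul, abs_inv, abs_of_pos hNpos]
  calc (N : ℝ)⁻¹ * |∑ i : Fin N, (NTK σ (c₁ i) (w₁ i) (b₁ i) x y
          - NTK σ (c₀ i) (w₀ i) (b₀ i) x y)|
      ≤ (N : ℝ)⁻¹ * ∑ i : Fin N, |NTK σ (c₁ i) (w₁ i) (b₁ i) x y
          - NTK σ (c₀ i) (w₀ i) (b₀ i) x y| := by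
        gcongr <;> first | exact inv_nonneg.mpr hNpos.le | exact Finset.abs_sum_le_sum_abs _ _
    _ ≤ (N : ℝ)⁻¹ * ∑ _i : Fin N, C * ρ := by
        gcongr with i _ <;> first | exact inv_nonneg.mpr hNpos.le | exact key _
    _ = C * ρ := by
        rw [Finset.sum_const, Finset.card_univ, Fintype.card_fin, nsmul_eq_mul]
        field_simp
end

section
/- Let H be a real Hilbert space, λ > 0, γ > 0, k₀ > 0. Let 𝓑 : H → H be a bounded self-adjoint linear operator with ⟨v, 𝓑v⟩ ≥ 0 and ‖𝓑v‖² ≤ λ⟨v, 𝓑v⟩ for all v ∈ H. Let 𝓛 : H → H be Lipschitz with constant k₀ and strongly monotone with constant γ: ⟨f₁ − f₂, 𝓛f₁ − 𝓛f₂⟩ ≤ −γ‖f₁ − f₂‖² for all f₁, f₂ ∈ H. Let u ∈ H satisfy 𝓛u = 0, and let Q : [0,∞) → H be differentiable with dQ_t/dt = 𝓑(𝓛(Q_t)) for all t ≥ 0, where Q₀ − u lies in the closure of the range of 𝓑 (i.e. for every ε > 0 there exists v₀ ∈ H with ‖Q₀ − u − 𝓑v₀‖ ≤ ε). Then (1/t)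 ∫₀ᵗ ‖Q_s − u‖² ds → 0 as t → ∞. -/
open scoped RealInnerProductSpace
open MeasureTheory

lemma ftc_Ici' {E : Type*} [NormedAddCommGroup E] [NormedSpace ℝ E] [CompleteSpace E] {g : ℝ → E}
    (hg : ContinuousOn g (Set.Ici 0)) (t : ℝ) (ht : t ∈ Set.Ici (0:ℝ)) :
    HasDerivWithinAt (fun t => ∫ s in (0:ℝ)..t, g s) (g t) (Set.Ici 0) t := by
  have hae : AEStronglyMeasurable g (volume.restrict (Set.Ici (0:ℝ))) :=
    hg.aestronglyMeasurable measurableSet_Ici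
  have hint : IntervalIntegrable g volume 0 t :=
    (hg.mono (by rw [Set.uIcc_of_le ht]; exact Set.Icc_subset_Ici_self)).intervalIntegrable
  rcases eq_or_lt_of_le (Set.mem_Ici.1 ht : (0:ℝ) ≤ t) with rfl | htpos
  · have hmeas : StronglyMeasurableAtFilter g (nhdsWithin 0 (Set.Ioi (0:ℝ))) volume :=
      ⟨Set.Ici 0, Filter.mem_of_superset self_mem_nhdsWithin Set.Ioi_subset_Ici_self, hae⟩
    have hb : ContinuousWithinAt g (Set.Ioi (0:ℝ)) 0 :=
      (hg 0 ht).mono Set.Ioi_subset_Ici_self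
    exact intervalIntegral.integral_hasDerivWithinAt_right hint hmeas hb
  · have hmem : Set.Ici (0:ℝ) ∈ nhds t := Ici_mem_nhds htpos
    have hca : ContinuousAt g t := hg.continuousAt hmem
    have hmeas : StronglyMeasurableAtFilter g (nhds t) volume := ⟨Set.Ici 0, hmem, hae⟩
    exact (intervalIntegral.integral_hasDerivAt_right hint hmeas hca).hasDerivWithinAt

/-- Large-training-time convergence of the wide-network limit: if `dQ/dt = 𝓑(𝓛(Q_t))`
with `𝓑` positive self-adjoint satisfying `‖𝓑v‖² ≤ λ⟨v,𝓑v⟩`, `𝓛` Lipschitz and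
strongly monotone, `𝓛u = 0`, and `Q₀ − u` lies in the closure of the range of `𝓑`,
then `(1/t)∫₀ᵗ ‖Q_s − u‖² ds → 0` as `t → ∞`. -/
theorem stmt_13 {H : Type*} [NormedAddCommGroup H] [InnerProductSpace ℝ H] [CompleteSpace H]
    (lam γ k₀ : ℝ) (hlam : 0 < lam) (hγ : 0 < γ) (hk₀ : 0 < k₀)
    (B : H →L[ℝ] H) (hsa : ∀ x y : H, ⟪B x, y⟫ = ⟪x, B y⟫)
    (hpos : ∀ v : H, 0 ≤ ⟪v, B v⟫) (hBnorm : ∀ v : H, ‖B v‖ ^ 2 ≤ lam * ⟪v, B v⟫)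
    (L : H → H) (hLip : LipschitzWith k₀.toNNReal L)
    (hmono : ∀ f₁ f₂ : H, ⟪f₁ - f₂, L f₁ - L f₂⟫ ≤ -γ * ‖f₁ - f₂‖ ^ 2)
    (u : H) (hu : L u = 0)
    (Q : ℝ → H)
    (hQ : ∀ t ∈ Set.Ici (0 : ℝ), HasDerivWithinAt Q (B (L (Q t))) (Set.Ici 0) t)
    (hrange : ∀ ε : ℝ, 0 < ε → ∃ v₀ : H, ‖Q 0 - u - B v₀‖ ≤ ε) :
    Filter.Tendsto (fun t : ℝ => (1 / t) * ∫ s in Set.Icc (0 : ℝ) t, ‖Q s - u‖ ^ 2)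
      Filter.atTop (nhds 0) := by
  have hk₀' : (k₀.toNNReal : ℝ) = k₀ := Real.coe_toNNReal k₀ hk₀.le
  have hQcont : ContinuousOn Q (Set.Ici 0) := fun t ht => (hQ t ht).continuousWithinAt
  have hgcont : ContinuousOn (fun s => L (Q s)) (Set.Ici 0) :=
    hLip.continuous.comp_continuousOn hQcont
  have hYcont : ContinuousOn (fun s => ‖Q s - u‖ ^ 2) (Set.Ici 0) :=
    (hQcont.sub continuousOn_const).norm.pow 2
  have hgY : ∀ s, ⟪L (Q s), Q s - u⟫ ≤ -γ * ‖Q s - u‖ ^ 2 := by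
    intro s
    have h := hmono (Q s) u
    rw [hu, sub_zero] at h
    rw [real_inner_comm]
    exact h
  have hgnorm : ∀ s, ‖L (Q s)‖ ≤ k₀ * ‖Q s - u‖ := by
    intro s
    have h := hLip.dist_le_mul (Q s) u
    rw [dist_eq_norm, dist_eq_norm, hu, sub_zero, hk₀'] at h
    exact h
  -- key estimate
  have key : ∀ ε : ℝ, 0 < ε → ∃ E0 : ℝ, 0 ≤ E0 ∧ ∀ t, 0 ≤ t →
      γ * (∫ s in (0:ℝ)..t, ‖Q s - u‖ ^ 2) ≤ E0 + (k₀ ^ 2 * ε ^ 2 / γ) * t := by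
    intro ε hε
    obtain ⟨v₀, hv₀⟩ := hrange ε hε
    set C : ℝ := k₀ ^ 2 * ε ^ 2 / γ with hC
    set v : ℝ → H := fun t => v₀ + ∫ s in (0:ℝ)..t, L (Q s) with hvdef
    have hv : ∀ t ∈ Set.Ici (0:ℝ), HasDerivWithinAt v (L (Q t)) (Set.Ici 0) t :=
      fun t ht => (ftc_Ici' hgcont t ht).const_add v₀
    have hv0 : v 0 = v₀ := by simp [hvdef]
    have hBv : ∀ t ∈ Set.Ici (0:ℝ),
        HasDerivWithinAt (fun t => B (v t)) (B (L (Q t))) (Set.Ici 0) t :=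
      fun t ht => (B.hasFDerivAt).comp_hasDerivWithinAt t (hv t ht)
    have hDd : ∀ t ∈ Set.Ici (0:ℝ),
        HasDerivWithinAt (fun t => Q t - u - B (v t)) 0 (Set.Ici 0) t := by
      intro t ht
      have h := ((hQ t ht).sub_const u).sub (hBv t ht)
      rw [sub_self] at h
      exact h
    have hDcont : ContinuousOn (fun t => Q t - u - B (v t)) (Set.Ici 0) :=
      fun t ht => (hDd t ht).continuousWithinAt
    have hconst : ∀ t, 0 ≤ t → Q t - u - B (v t) = Q 0 - u - B v₀ := by
      intro t ht
      have h := constant_of_has_deriv_right_zero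
        (f := fun t => Q t - u - B (v t)) (a := 0) (b := t)
        (hDcont.mono Set.Icc_subset_Ici_self)
        (fun x hx => (hDd x (Set.mem_Ici.2 hx.1)).mono (Set.Ici_subset_Ici.2 hx.1))
        t (Set.mem_Icc.2 ⟨ht, le_rfl⟩)
      rw [hv0] at h
      exact h
    have hBveq : ∀ t, 0 ≤ t → B (v t) = (Q t - u) - (Q 0 - u - B v₀) := by
      intro t ht
      have h := hconst t ht
      rw [← h]; abel
    set W : ℝ → ℝ :=
      fun t => ⟪v t, B (v t)⟫ + (∫ s in (0:ℝ)..t, γ * ‖Q s - u‖ ^ 2) - C * t with hWdef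
    have hIcont : ContinuousOn (fun s => γ * ‖Q s - u‖ ^ 2) (Set.Ici 0) :=
      continuousOn_const.mul hYcont
    have hW : ∀ t ∈ Set.Ici (0:ℝ), HasDerivWithinAt W
        (2 * ⟪L (Q t), B (v t)⟫ + γ * ‖Q t - u‖ ^ 2 - C) (Set.Ici 0) t := by
      intro t ht
      have h1 : HasDerivWithinAt (fun t => ⟪v t, B (v t)⟫)
          (⟪v t, B (L (Q t))⟫ + ⟪L (Q t), B (v t)⟫) (Set.Ici 0) t :=
        HasDerivWithinAt.inner ℝ (hv t ht) (hBv t ht)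
      have hI : HasDerivWithinAt (fun t => ∫ s in (0:ℝ)..t, γ * ‖Q s - u‖ ^ 2)
          (γ * ‖Q t - u‖ ^ 2) (Set.Ici 0) t := ftc_Ici' hIcont t ht
      have h2 : ⟪v t, B (L (Q t))⟫ = ⟪L (Q t), B (v t)⟫ := by
        rw [← hsa (v t) (L (Q t))]
        exact real_inner_comm _ _
      have h := (h1.add hI).sub ((hasDerivWithinAt_id t (Set.Ici 0)).const_mul C)
      have heq : ⟪v t, B (L (Q t))⟫ + ⟪L (Q t), B (v t)⟫ + γ * ‖Q t - u‖ ^ 2 - C * 1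
          = 2 * ⟪L (Q t), B (v t)⟫ + γ * ‖Q t - u‖ ^ 2 - C := by rw [h2]; ring
      rw [heq] at h
      exact h
    have hW' : ∀ t ∈ Set.Ici (0:ℝ),
        2 * ⟪L (Q t), B (v t)⟫ + γ * ‖Q t - u‖ ^ 2 - C ≤ 0 := by
      intro t ht
      have hb := hBveq t ht
      have h1 : ⟪L (Q t), B (v t)⟫ = ⟪L (Q t), Q t - u⟫ - ⟪L (Q t), Q 0 - u - B v₀⟫ := by
        rw [hb, inner_sub_right]
      have h2 := hgY t
      have h3 : |⟪L (Q t), Q 0 - u - B v₀⟫| ≤ (k₀ * ‖Q t - u‖) * ε := by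
        calc |⟪L (Q t), Q 0 - u - B v₀⟫| ≤ ‖L (Q t)‖ * ‖Q 0 - u - B v₀‖ :=
              abs_real_inner_le_norm _ _
        _ ≤ (k₀ * ‖Q t - u‖) * ε :=
              mul_le_mul (hgnorm t) hv₀ (norm_nonneg _) (by positivity)
      have h4 : -((k₀ * ‖Q t - u‖) * ε) ≤ ⟪L (Q t), Q 0 - u - B v₀⟫ := neg_le_of_abs_le h3
      have h5 : γ * (2 * (k₀ * ‖Q t - u‖ * ε) - γ * ‖Q t - u‖ ^ 2) ≤ k₀ ^ 2 * ε ^ 2 := by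
        nlinarith [sq_nonneg (γ * ‖Q t - u‖ - k₀ * ε)]
      have h6 : 2 * (k₀ * ‖Q t - u‖ * ε) - γ * ‖Q t - u‖ ^ 2 ≤ C := by
        rw [hC, le_div_iff₀ hγ]
        linarith [h5]
      rw [h1]
      nlinarith [h2, h4, h6]
    have hWcont : ContinuousOn W (Set.Ici 0) := fun t ht => (hW t ht).continuousWithinAt
    have hanti : AntitoneOn W (Set.Ici 0) := by
      apply antitoneOn_of_hasDerivWithinAt_nonpos (convex_Ici 0) hWcont
        (f' := fun t => 2 * ⟪L (Q t), B (v t)⟫ + γ * ‖Q t - u‖ ^ 2 - C)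
      · intro x hx
        exact (hW x (interior_subset hx)).mono interior_subset
      · intro x hx
        exact hW' x (interior_subset hx)
    refine ⟨⟪v₀, B v₀⟫, hpos _, fun t ht => ?_⟩
    have h := hanti Set.self_mem_Ici (Set.mem_Ici.2 ht) ht
    have hW0 : W 0 = ⟪v₀, B v₀⟫ := by simp [hWdef, hv0]
    have hposT : 0 ≤ ⟪v t, B (v t)⟫ := hpos _
    have hIeq : (∫ s in (0:ℝ)..t, γ * ‖Q s - u‖ ^ 2)
        = γ * ∫ s in (0:ℝ)..t, ‖Q s - u‖ ^ 2 := intervalIntegral.integral_const_mul _ _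
    rw [hW0, hWdef] at h
    simp only at h
    rw [hIeq] at h
    linarith
  -- conclusion
  rw [Metric.tendsto_atTop]
  intro δ hδ
  have hεpos : 0 < Real.sqrt (γ ^ 2 * δ / (4 * k₀ ^ 2)) := Real.sqrt_pos.2 (by positivity)
  obtain ⟨E0, hE0, hkey⟩ := key _ hεpos
  have hε2 : Real.sqrt (γ ^ 2 * δ / (4 * k₀ ^ 2)) ^ 2 = γ ^ 2 * δ / (4 * k₀ ^ 2) :=
    Real.sq_sqrt (by positivity)
  have hCeq : k₀ ^ 2 * Real.sqrt (γ ^ 2 * δ / (4 * k₀ ^ 2)) ^ 2 / γ = γ * δ / 4 := by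
    rw [hε2]
    field_simp
  refine ⟨max 1 (4 * E0 / (γ * δ)), fun t ht => ?_⟩
  have ht1 : (1:ℝ) ≤ t := le_trans (le_max_left _ _) ht
  have ht0 : (0:ℝ) < t := lt_of_lt_of_le one_pos ht1
  have ht2 : 4 * E0 / (γ * δ) ≤ t := le_trans (le_max_right _ _) ht
  have hE0t : 4 * E0 ≤ γ * δ * t := by
    rw [div_le_iff₀ (by positivity)] at ht2
    linarith
  have hIeq : (∫ s in Set.Icc (0:ℝ) t, ‖Q s - u‖ ^ 2) = ∫ s in (0:ℝ)..t, ‖Q s - u‖ ^ 2 := by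
    rw [intervalIntegral.integral_of_le ht0.le, MeasureTheory.integral_Icc_eq_integral_Ioc]
  have hInn : 0 ≤ ∫ s in Set.Icc (0:ℝ) t, ‖Q s - u‖ ^ 2 :=
    MeasureTheory.integral_nonneg fun s => sq_nonneg _
  have hbound := hkey t ht0.le
  rw [hCeq] at hbound
  rw [Real.dist_eq, sub_zero,
    abs_of_nonneg (mul_nonneg (by positivity) hInn), hIeq]
  have hlt : (∫ s in (0:ℝ)..t, ‖Q s - u‖ ^ 2) < δ * t := by
    have hm : 0 < γ * δ * t := by positivity
    have h7 : γ * (∫ s in (0:ℝ)..t, ‖Q s - u‖ ^ 2) < γ * (δ * t) := by nlinarith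
    exact lt_of_mul_lt_mul_left h7 hγ.le
  calc (1 / t) * ∫ s in (0:ℝ)..t, ‖Q s - u‖ ^ 2
      = (∫ s in (0:ℝ)..t, ‖Q s - u‖ ^ 2) / t := by ring
  _ < δ := (div_lt_iff₀ ht0).2 (by linarith)
end

section
/- Let H be a real Hilbert space, λ > 0, γ > 0. Let 𝓑 : H → H be a bounded self-adjoint linear operator with ⟨v, 𝓑v⟩ ≥ 0 and ‖𝓑v‖² ≤ λ⟨v, 𝓑v⟩ for all v ∈ H. Let v : [0,∞) → H be differentiable with ⟨𝓑v_t, v'_t⟩ ≤ −γ‖𝓑v_t‖² for all t ≥ 0. Then for every t ≥ 0, ∫₀ᵗ ‖𝓑v_s‖² ds ≤ ⟨v₀, 𝓑v₀⟩ / (2γ). -/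
open scoped RealInnerProductSpace

/-- Dissipation estimate: if `⟨𝓑v_t, v'_t⟩ ≤ −γ‖𝓑v_t‖²` along a differentiable curve `v`,
with `𝓑` positive self-adjoint satisfying `‖𝓑v‖² ≤ λ⟨v,𝓑v⟩`, then
`∫₀ᵗ ‖𝓑v_s‖² ds ≤ ⟨v₀, 𝓑v₀⟩/(2γ)` for all `t ≥ 0`. -/
theorem stmt_15 {H : Type*} [NormedAddCommGroup H] [InnerProductSpace ℝ H] [CompleteSpace H]
    (lam γ : ℝ) (hlam : 0 < lam) (hγ : 0 < γ)
    (B : H →L[ℝ] H) (hsa : ∀ x y : H, ⟪B x, y⟫ = ⟪x, B y⟫)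
    (hpos : ∀ v : H, 0 ≤ ⟪v, B v⟫) (hBnorm : ∀ v : H, ‖B v‖ ^ 2 ≤ lam * ⟪v, B v⟫)
    (v : ℝ → H) (v' : ℝ → H)
    (hv : ∀ t ∈ Set.Ici (0 : ℝ), HasDerivWithinAt v (v' t) (Set.Ici 0) t)
    (hdiss : ∀ t ∈ Set.Ici (0 : ℝ), ⟪B (v t), v' t⟫ ≤ -γ * ‖B (v t)‖ ^ 2) :
    ∀ t : ℝ, 0 ≤ t →
      ∫ s in Set.Icc (0 : ℝ) t, ‖B (v s)‖ ^ 2 ≤ ⟪v 0, B (v 0)⟫ / (2 * γ) := by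
  intro t ht
  set f : ℝ → ℝ := fun s => ‖B (v s)‖ ^ 2 with hf
  set g : ℝ → ℝ := fun s => ⟪v s, B (v s)⟫ with hg
  -- continuity of v on Ici 0
  have hvc : ContinuousOn v (Set.Ici 0) := fun s hs => (hv s hs).continuousWithinAt
  have hfc : ContinuousOn f (Set.Ici 0) := by
    apply ContinuousOn.pow
    exact (B.continuous.comp_continuousOn hvc).norm
  -- derivative of g within Ici 0
  have hg' : ∀ s ∈ Set.Ici (0 : ℝ), HasDerivWithinAt g (2 * ⟪B (v s), v' s⟫) (Set.Ici 0) s := by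
    intro s hs
    have hBv : HasDerivWithinAt (fun u => B (v u)) (B (v' s)) (Set.Ici 0) s :=
      B.hasFDerivAt.comp_hasDerivWithinAt s (hv s hs)
    have : HasDerivWithinAt g (⟪v s, B (v' s)⟫ + ⟪v' s, B (v s)⟫) (Set.Ici 0) s :=
      (hv s hs).inner ℝ hBv
    convert this using 1
    have h1 : ⟪v s, B (v' s)⟫ = ⟪B (v s), v' s⟫ := (hsa (v s) (v' s)).symm
    have h2 : ⟪v' s, B (v s)⟫ = ⟪B (v s), v' s⟫ := by
      rw [real_inner_comm]
    rw [h1, h2]; ring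
  -- interval integrability of f on subintervals
  have hint : ∀ x ∈ Set.Icc (0:ℝ) t, IntervalIntegrable f MeasureTheory.volume 0 x := by
    intro x hx
    apply ContinuousOn.intervalIntegrable
    apply hfc.mono
    rw [Set.uIcc_of_le hx.1]
    exact fun y hy => hy.1
  -- F := g + 2γ * ∫₀ˢ f is antitone on [0, t]
  set I : ℝ → ℝ := fun s => ∫ u in (0:ℝ)..s, f u with hI
  set F : ℝ → ℝ := fun s => g s + 2 * γ * I s with hF
  have hfInt : MeasureTheory.IntegrableOn f (Set.uIcc (0:ℝ) t) MeasureTheory.volume := by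
    rw [Set.uIcc_of_le ht]
    exact (hfc.mono (fun y hy => hy.1)).integrableOn_Icc
  have hIcont : ContinuousOn I (Set.Icc 0 t) := by
    rw [← Set.uIcc_of_le ht]
    exact intervalIntegral.continuousOn_primitive_interval hfInt
  have hFcont : ContinuousOn F (Set.Icc 0 t) := by
    apply ContinuousOn.add
    · exact fun x hx => ((hg' x hx.1).continuousWithinAt).mono (fun y hy => hy.1)
    · exact (continuousOn_const.mul hIcont)
  have hFderiv : ∀ x ∈ Set.Ioo (0:ℝ) t,
      HasDerivAt F (2 * ⟪B (v x), v' x⟫ + 2 * γ * f x) x := by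
    intro x hx
    have hmem : Set.Ici (0:ℝ) ∈ nhds x := Ici_mem_nhds hx.1
    have hgd : HasDerivAt g (2 * ⟪B (v x), v' x⟫) x :=
      (hg' x (le_of_lt hx.1)).hasDerivAt hmem
    have hId : HasDerivAt I (f x) x := by
      have hfx : ContinuousAt f x :=
        (hfc x (le_of_lt hx.1)).continuousAt hmem
      exact intervalIntegral.integral_hasDerivAt_right
        (hint x ⟨le_of_lt hx.1, le_of_lt hx.2⟩)
        (ContinuousOn.stronglyMeasurableAtFilter isOpen_Ioi
          (hfc.mono Set.Ioi_subset_Ici_self) x hx.1) hfx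
    exact hgd.add (hId.const_mul (2 * γ))
  have hanti : AntitoneOn F (Set.Icc 0 t) := by
    apply antitoneOn_of_deriv_nonpos (convex_Icc 0 t) hFcont
    · intro x hx
      rw [interior_Icc] at hx
      exact (hFderiv x hx).differentiableAt.differentiableWithinAt
    · intro x hx
      rw [interior_Icc] at hx
      rw [(hFderiv x hx).deriv]
      have h1 := hdiss x (le_of_lt hx.1)
      have h2 : f x = ‖B (v x)‖ ^ 2 := rfl
      rw [h2]
      nlinarith [h1]
  have hF0 : F t ≤ F 0 := hanti (Set.left_mem_Icc.mpr ht) (Set.right_mem_Icc.mpr ht) ht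
  have hI0 : I 0 = 0 := intervalIntegral.integral_same
  have hgt : 0 ≤ g t := hpos (v t)
  have hIt : 2 * γ * I t ≤ g 0 := by
    have : g t + 2 * γ * I t ≤ g 0 + 2 * γ * I 0 := hF0
    rw [hI0] at this
    linarith
  have hItval : I t ≤ g 0 / (2 * γ) := by
    rw [le_div_iff₀ (by positivity)]
    linarith [hIt]
  have heq : I t = ∫ s in Set.Icc (0:ℝ) t, f s := by
    show ∫ u in (0:ℝ)..t, f u = _
    rw [intervalIntegral.integral_of_le ht, MeasureTheory.integral_Icc_eq_integral_Ioc]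
  calc ∫ s in Set.Icc (0:ℝ) t, f s = I t := heq.symm
    _ ≤ g 0 / (2 * γ) := hItval
end
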